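/- arXiv:2502.07681 — 5 statements merged into one kernel-verified Lean document; each statement's English description precedes it below -/
import Mathlib

section
/- For every Boolean ring R, the map σ : R → 𝔹(Spec(R)) sending a to the function 𝔭 ↦ 0 if a ∈ 𝔭 and 1 if a ∉ 𝔭 is a ring isomorphism, where 𝔹(X) denotes the ring of continuous functions from X to the discrete field 𝔽₂. -/
instance : TopologicalSpace (ZMod 2) := ⊥
instance : DiscreteTopology (ZMod 2) := ⟨rfl⟩

attribute [local instance] Classical.propDecidable

section Aux

variable {R : Type*} [CommRing R]

lemma bool_char_two (hB : ∀ x : R, x * x = x) (a : R) : a + a = 0 := by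
  linear_combination hB (a + a) - 4 * hB a

lemma bool_mem_compl (hB : ∀ x : R, x * x = x) (p : PrimeSpectrum R) (a : R) :
    a ∈ p.asIdeal ↔ (1 - a) ∉ p.asIdeal := by
  have h0 : a * (1 - a) = 0 := by linear_combination -hB a
  have hor : a ∈ p.asIdeal ∨ (1 - a) ∈ p.asIdeal :=
    p.isPrime.mem_or_mem (h0 ▸ p.asIdeal.zero_mem)
  constructor
  · intro ha h1a
    exact p.isPrime.ne_top (p.asIdeal.eq_top_of_isUnit_mem
      (by simpa using p.asIdeal.add_mem ha h1a) isUnit_one)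
  · intro h; tauto

lemma bool_mem_add (hB : ∀ x : R, x * x = x) (p : PrimeSpectrum R) (a b : R) :
    a + b ∈ p.asIdeal ↔ (a ∈ p.asIdeal ↔ b ∈ p.asIdeal) := by
  by_cases ha : a ∈ p.asIdeal
  · rw [Ideal.add_mem_iff_right _ ha]; tauto
  · by_cases hb : b ∈ p.asIdeal
    · constructor
      · intro h; exact absurd (by simpa using p.asIdeal.sub_mem h hb) ha
      · tauto
    · have h0 : a * b * (a + b) = 0 := by
        linear_combination b * hB a + a * hB b + bool_char_two hB (a * b)
      have := p.isPrime.mem_or_mem (h0 ▸ p.asIdeal.zero_mem)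
      rcases this with h | h
      · rcases p.isPrime.mem_or_mem h with h | h <;> tauto
      · tauto

/-- the function σ a is continuous -/
lemma bool_sigma_continuous (hB : ∀ x : R, x * x = x) (a : R) :
    Continuous (fun p : PrimeSpectrum R =>
      if a ∈ p.asIdeal then (0 : ZMod 2) else 1) := by
  apply IsLocallyConstant.continuous
  rw [IsLocallyConstant.iff_isOpen_fiber]
  intro y
  have hzero : ((fun p : PrimeSpectrum R =>
      if a ∈ p.asIdeal then (0 : ZMod 2) else 1) ⁻¹' {0}) =
      ↑(PrimeSpectrum.basicOpen (1 - a)) := by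
    ext p
    simp only [Set.mem_preimage, Set.mem_singleton_iff, SetLike.mem_coe,
      PrimeSpectrum.mem_basicOpen]
    by_cases hp : a ∈ p.asIdeal
    · simp [hp, (bool_mem_compl hB p a).mp hp]
    · simp only [if_neg hp]
      constructor
      · intro h; exact absurd h one_ne_zero
      · intro h; exact absurd ((bool_mem_compl hB p a).mpr h) hp
  have hone : ((fun p : PrimeSpectrum R =>
      if a ∈ p.asIdeal then (0 : ZMod 2) else 1) ⁻¹' {1}) =
      ↑(PrimeSpectrum.basicOpen a) := by
    ext p
    simp only [Set.mem_preimage, Set.mem_singleton_iff, SetLike.mem_coe,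
      PrimeSpectrum.mem_basicOpen]
    by_cases hp : a ∈ p.asIdeal <;> simp [hp]
  have hy : y = 0 ∨ y = 1 := by
    have : ∀ z : ZMod 2, z = 0 ∨ z = 1 := by decide
    exact this y
  rcases hy with rfl | rfl
  · rw [hzero]; exact (PrimeSpectrum.basicOpen (1 - a)).isOpen
  · rw [hone]; exact (PrimeSpectrum.basicOpen a).isOpen

/-- σ as a ring hom -/
noncomputable def boolSigma (hB : ∀ x : R, x * x = x) :
    R →+* C(PrimeSpectrum R, ZMod 2) where
  toFun a := ⟨fun p => if a ∈ p.asIdeal then 0 else 1, bool_sigma_continuous hB a⟩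
  map_one' := by
    ext p
    simp [p.isPrime.ne_top, Ideal.eq_top_iff_one]
    intro h
    exact p.isPrime.ne_top (Ideal.eq_top_iff_one _ |>.mpr h)
  map_mul' a b := by
    ext p
    simp only [ContinuousMap.coe_mk, ContinuousMap.mul_apply]
    rw [p.isPrime.mul_mem_iff_mem_or_mem]
    by_cases ha : a ∈ p.asIdeal <;> by_cases hb : b ∈ p.asIdeal <;>
      simp [ha, hb]
  map_zero' := by
    ext p
    simp
  map_add' a b := by
    ext p
    simp only [ContinuousMap.coe_mk, ContinuousMap.add_apply]
    rw [show (a + b ∈ p.asIdeal) = (a ∈ p.asIdeal ↔ b ∈ p.asIdeal) from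
      propext (bool_mem_add hB p a b)]
    by_cases ha : a ∈ p.asIdeal <;> by_cases hb : b ∈ p.asIdeal <;>
      simp [ha, hb] <;> decide

lemma boolSigma_bijective (hB : ∀ x : R, x * x = x) :
    Function.Bijective (boolSigma hB) := by
  constructor
  · rw [injective_iff_map_eq_zero]
    intro a ha
    have hmem : ∀ p : PrimeSpectrum R, a ∈ p.asIdeal := by
      intro p
      have := congrArg (fun f : C(PrimeSpectrum R, ZMod 2) => f p) ha
      simp only [boolSigma, RingHom.coe_mk, MonoidHom.coe_mk, OneHom.coe_mk,
        ContinuousMap.coe_mk, ContinuousMap.zero_apply] at this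
      by_contra h
      rw [if_neg h] at this
      exact one_ne_zero this
    have hnil : IsNilpotent a := by
      rw [← mem_nilradical, nilradical_eq_sInf]
      exact Submodule.mem_sInf.mpr fun J hJ => hmem ⟨J, hJ⟩
    obtain ⟨n, hn⟩ := hnil
    have hpow : ∀ m : ℕ, a ^ (m + 1) = a := by
      intro m
      induction m with
      | zero => simp
      | succ k ih => rw [pow_succ, ih, hB]
    calc a = a ^ (n + 1) := (hpow n).symm
      _ = a ^ n * a := pow_succ a n
      _ = 0 := by rw [hn, zero_mul]
  · intro f
    have hclopen : IsClopen (f ⁻¹' {1}) :=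
      (isClopen_discrete ({1} : Set (ZMod 2))).preimage f.continuous
    obtain ⟨e, he, hU⟩ :=
      PrimeSpectrum.exists_idempotent_basicOpen_eq_of_isClopen hclopen
    refine ⟨e, ?_⟩
    ext p
    simp only [boolSigma, RingHom.coe_mk, MonoidHom.coe_mk, OneHom.coe_mk,
      ContinuousMap.coe_mk]
    by_cases hp : e ∈ p.asIdeal
    · rw [if_pos hp]
      have : p ∉ f ⁻¹' {1} := by
        rw [hU]
        simpa [PrimeSpectrum.mem_basicOpen] using hp
      have hfp : f p ≠ 1 := by simpa using this
      have : ∀ x : ZMod 2, x ≠ 1 → x = 0 := by decide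
      exact (this _ hfp).symm
    · rw [if_neg hp]
      have : p ∈ f ⁻¹' {1} := by
        rw [hU]
        simpa [PrimeSpectrum.mem_basicOpen] using hp
      simpa using this.symm

end Aux

/-- For a Boolean ring `R`, the map `σ : R → 𝔹(Spec R)`, sending `a` to the
function `𝔭 ↦ 0` if `a ∈ 𝔭` and `1` otherwise, is a ring isomorphism. -/
theorem boolean_sigma_ringIso (R : Type*) [CommRing R] (hB : ∀ x : R, x * x = x) :
    ∃ e : R ≃+* C(PrimeSpectrum R, ZMod 2),
      ∀ (a : R) (p : PrimeSpectrum R),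
        e a p = if a ∈ p.asIdeal then 0 else 1 := by
  refine ⟨RingEquiv.ofBijective (boolSigma hB) (boolSigma_bijective hB), ?_⟩
  intro a p
  rfl
end

section
/- Let X be a compact and totally separated topological space. Then the map β : X → Spec(𝔹(X)) sending a point p to the maximal ideal {f ∈ 𝔹(X) : f(p) = 0} is a homeomorphism. -/
section Aux

variable {X : Type*} [TopologicalSpace X]

/-- Evaluation at a point as a ring hom `C(X, ZMod 2) →+* ZMod 2`. -/
def evalHom (p : X) : C(X, ZMod 2) →+* ZMod 2 where
  toFun f := f p
  map_one' := rfl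
  map_mul' _ _ := rfl
  map_zero' := rfl
  map_add' _ _ := rfl

lemma zmod2_mul_one_sub : ∀ a : ZMod 2, a * (1 - a) = 0 := by decide

lemma zmod2_one_sub_eq_zero : ∀ a : ZMod 2, a ≠ 0 → 1 - a = 0 := by decide

lemma cmap_mul_one_sub (f : C(X, ZMod 2)) : f * (1 - f) = 0 := by
  ext x
  exact zmod2_mul_one_sub (f x)

lemma one_sub_prod_mem (I : Ideal C(X, ZMod 2)) (t : Finset C(X, ZMod 2)) :
    (∀ f ∈ t, f ∈ I) → 1 - ∏ f ∈ t, (1 - f) ∈ I := by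
  classical
  refine Finset.induction_on t (fun _ => by simp) ?_
  intro a s ha ih ht
  rw [Finset.prod_insert ha]
  have h1 : 1 - ∏ f ∈ s, (1 - f) ∈ I := ih fun f hf => ht f (Finset.mem_insert_of_mem hf)
  have h2 : a * ∏ f ∈ s, (1 - f) ∈ I :=
    I.mul_mem_right _ (ht a (Finset.mem_insert_self a s))
  have heq : 1 - (1 - a) * ∏ f ∈ s, (1 - f)
      = (1 - ∏ f ∈ s, (1 - f)) + a * ∏ f ∈ s, (1 - f) := by ring
  rw [heq]
  exact I.add_mem h1 h2

/-- The prime spectrum of `C(X, ZMod 2)` is Hausdorff. -/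
lemma spec_t2 : T2Space (PrimeSpectrum C(X, ZMod 2)) := by
  constructor
  intro P Q hPQ
  have : P.asIdeal ≠ Q.asIdeal := fun h => hPQ (PrimeSpectrum.ext h)
  have key : ∀ (P Q : PrimeSpectrum C(X, ZMod 2)) (f : C(X, ZMod 2)),
      f ∈ P.asIdeal → f ∉ Q.asIdeal →
      ∃ u v, IsOpen u ∧ IsOpen v ∧ P ∈ u ∧ Q ∈ v ∧ Disjoint u v := by
    intro P Q f hfP hfQ
    refine ⟨(PrimeSpectrum.basicOpen (1 - f) : Set _),
      (PrimeSpectrum.basicOpen f : Set _),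
      (PrimeSpectrum.basicOpen _).2, (PrimeSpectrum.basicOpen _).2, ?_, hfQ, ?_⟩
    · intro h1f
      exact P.isPrime.ne_top (Ideal.eq_top_iff_one _ |>.2 (by
        have := P.asIdeal.add_mem hfP h1f
        simpa using this))
    · rw [Set.disjoint_iff]
      rintro R ⟨h1, h2⟩
      have h0 : f * (1 - f) ∈ R.asIdeal := by
        rw [cmap_mul_one_sub]; exact R.asIdeal.zero_mem
      rcases R.isPrime.mem_or_mem h0 with h | h
      · exact h2 h
      · exact h1 h
  by_cases h : ∃ f, f ∈ P.asIdeal ∧ f ∉ Q.asIdeal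
  · obtain ⟨f, h1, h2⟩ := h
    exact key P Q f h1 h2
  · push_neg at h
    have : ∃ f, f ∈ Q.asIdeal ∧ f ∉ P.asIdeal := by
      by_contra hc
      push_neg at hc
      exact this (le_antisymm h hc)
    obtain ⟨f, h1, h2⟩ := this
    obtain ⟨u, v, hu, hv, hQu, hPv, hd⟩ := key Q P f h1 h2
    exact ⟨v, u, hv, hu, hPv, hQu, hd.symm⟩

end Aux

/-- For a compact totally separated space `X`, the map
`β : X → Spec 𝔹(X)`, `p ↦ {f | f p = 0}`, is a homeomorphism. -/
theorem beta_homeomorph (X : Type*) [TopologicalSpace X] [CompactSpace X]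
    [TotallySeparatedSpace X] :
    ∃ e : X ≃ₜ PrimeSpectrum C(X, ZMod 2),
      ∀ (p : X) (f : C(X, ZMod 2)), f ∈ (e p).asIdeal ↔ f p = 0 := by
  classical
  haveI : Fact (Nat.Prime 2) := ⟨Nat.prime_two⟩
  let β : X → PrimeSpectrum C(X, ZMod 2) := fun p =>
    ⟨RingHom.ker (evalHom p), RingHom.ker_isPrime _⟩
  have hmem : ∀ (p : X) (f : C(X, ZMod 2)), f ∈ (β p).asIdeal ↔ f p = 0 := fun p f => Iff.rfl
  -- injectivity
  have hinj : Function.Injective β := by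
    intro p q h
    by_contra hpq
    obtain ⟨U, hU, hp, hq⟩ := exists_isClopen_of_totally_separated hpq
    let f : C(X, ZMod 2) :=
      ⟨(fun b : Bool => if b then (1 : ZMod 2) else 0) ∘ U.boolIndicator,
        (continuous_of_discreteTopology).comp
          ((continuous_boolIndicator_iff_isClopen U).2 hU)⟩
    have hfp : f p = 1 := by
      simp only [f, ContinuousMap.coe_mk, Function.comp_apply]
      rw [Set.mem_iff_boolIndicator U p |>.1 hp]
      simp
    have hfq : f q = 0 := by
      simp only [f, ContinuousMap.coe_mk, Function.comp_apply]
      have : U.boolIndicator q = false := by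
        by_contra hb
        exact hq (Set.mem_iff_boolIndicator U q |>.2 (eq_true_of_ne_false hb))
      rw [this]
      simp
    have hin : f ∈ (β q).asIdeal := (hmem q f).2 hfq
    rw [← h, hmem p f, hfp] at hin
    exact one_ne_zero hin
  -- surjectivity
  have hsurj : Function.Surjective β := by
    intro P
    have hne : (⋂ f : P.asIdeal, ((f : C(X, ZMod 2)) ⁻¹' {(0 : ZMod 2)} : Set X)).Nonempty := by
      by_contra hc
      rw [Set.not_nonempty_iff_eq_empty] at hc
      obtain ⟨t, ht⟩ := IsCompact.elim_finite_subfamily_closed isCompact_univ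
        (fun f : P.asIdeal => ((f : C(X, ZMod 2)) ⁻¹' {(0 : ZMod 2)} : Set X))
        (fun f => IsClosed.preimage (f : C(X, ZMod 2)).continuous isClosed_singleton)
        (by simp [hc])
      set s : Finset C(X, ZMod 2) := t.image Subtype.val with hs
      have hsub : ∀ f ∈ s, f ∈ P.asIdeal := by
        intro f hf
        simp only [hs, Finset.mem_image] at hf
        obtain ⟨g, _, rfl⟩ := hf
        exact g.2
      have hmemI : 1 - ∏ f ∈ s, (1 - f) ∈ P.asIdeal := one_sub_prod_mem _ _ hsub
      have hprod : ∏ f ∈ s, (1 - f) = 0 := by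
        ext x
        have hx : x ∉ ⋂ i ∈ t, ((i : C(X, ZMod 2)) ⁻¹' {(0 : ZMod 2)} : Set X) := by
          intro hx
          have : x ∈ (∅ : Set X) := ht ▸ ⟨Set.mem_univ x, hx⟩
          exact this
        simp only [Set.mem_iInter, Set.mem_preimage, Set.mem_singleton_iff, not_forall] at hx
        obtain ⟨g, hgt, hg⟩ := hx
        show evalHom x (∏ f ∈ s, (1 - f)) = evalHom x 0
        rw [map_prod, map_zero]
        refine Finset.prod_eq_zero (i := (g : C(X, ZMod 2)))
          (by simp only [hs, Finset.mem_image]; exact ⟨g, hgt, rfl⟩) ?_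
        have : evalHom x (1 - (g : C(X, ZMod 2))) = 1 - (g : C(X, ZMod 2)) x := by
          simp [evalHom]
          rfl
        rw [this]
        exact zmod2_one_sub_eq_zero _ hg
      rw [hprod, sub_zero] at hmemI
      exact P.isPrime.ne_top ((Ideal.eq_top_iff_one _).2 hmemI)
    obtain ⟨p, hp⟩ := hne
    simp only [Set.mem_iInter, Set.mem_preimage, Set.mem_singleton_iff] at hp
    refine ⟨p, ?_⟩
    apply PrimeSpectrum.ext
    apply le_antisymm
    · -- ker eval ≤ P
      intro f hf
      have hf0 : f p = 0 := hf
      rcases P.isPrime.mem_or_mem (show f * (1 - f) ∈ P.asIdeal by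
        rw [cmap_mul_one_sub]; exact P.asIdeal.zero_mem) with h | h
      · exact h
      · exfalso
        have := hp ⟨_, h⟩
        simp only [ContinuousMap.sub_apply, ContinuousMap.one_apply, hf0, sub_zero] at this
        exact one_ne_zero this
    · intro f hf
      exact hp ⟨f, hf⟩
  -- continuity
  have hcont : Continuous β := by
    rw [continuous_iff_isClosed]
    intro s hs
    obtain ⟨t, rfl⟩ := (PrimeSpectrum.isClosed_iff_zeroLocus s).1 hs
    have : β ⁻¹' PrimeSpectrum.zeroLocus t = ⋂ f ∈ t, (f ⁻¹' {(0 : ZMod 2)}) := by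
      ext p
      simp only [Set.mem_preimage, PrimeSpectrum.mem_zeroLocus, Set.mem_iInter,
        Set.mem_singleton_iff]
      constructor
      · intro h f hf
        exact h hf
      · intro h f hf
        exact h f hf
    rw [this]
    exact isClosed_biInter fun f _ => IsClosed.preimage f.continuous isClosed_singleton
  haveI : T2Space (PrimeSpectrum C(X, ZMod 2)) := spec_t2
  let e := Continuous.homeoOfEquivCompactToT2
    (f := Equiv.ofBijective β ⟨hinj, hsurj⟩) hcont
  exact ⟨e, fun p f => hmem p f⟩
end

section
/- Let f : Y → X be a continuous map with X profinite, such that every x ∈ X has an open neighbourhood U for which the restriction f : f⁻¹(U) → U admits a continuous section. Then f admits a continuous section s : X → Y (with f ∘ s = id_X). -/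
open Set

/-- Glue a section over a clopen set `A` with a section over an arbitrary set `B`
to get a section over `A ∪ B`. -/
lemma glue_sections {X Y : Type*} [TopologicalSpace X] [TopologicalSpace Y]
    (f : Y → X) (A B : Set X) (hA : IsClopen A)
    (sA : C(A, Y)) (hsA : ∀ u : A, f (sA u) = (u : X))
    (sB : C(B, Y)) (hsB : ∀ u : B, f (sB u) = (u : X)) :
    ∃ s : C((A ∪ B : Set X), Y), ∀ u : (A ∪ B : Set X), f (s u) = (u : X) := by
  classical
  set s : (A ∪ B : Set X) → Y := fun p =>
    if h : (p : X) ∈ A then sA ⟨p, h⟩ else sB ⟨p, p.2.resolve_left h⟩ with hs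
  have hval : ∀ u : (A ∪ B : Set X), f (s u) = (u : X) := by
    intro u
    by_cases h : (u : X) ∈ A
    · simp only [hs, dif_pos h]; exact hsA _
    · simp only [hs, dif_neg h]; exact hsB _
  set O : Set (A ∪ B : Set X) := Subtype.val ⁻¹' A with hO
  have hOopen : IsOpen O := hA.2.preimage continuous_subtype_val
  have hOcopen : IsOpen Oᶜ := by
    have : Oᶜ = Subtype.val ⁻¹' Aᶜ := rfl
    rw [this]
    exact (hA.1.isOpen_compl).preimage continuous_subtype_val
  have hcO : ContinuousOn s O := by
    rw [continuousOn_iff_continuous_restrict]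
    have : O.domRestrict s = fun q : O => sA ⟨(q : (A ∪ B : Set X)), q.2⟩ := by
      funext q
      exact dif_pos q.2
    rw [this]
    exact sA.continuous.comp ((continuous_subtype_val.comp continuous_subtype_val).subtype_mk _)
  have hcOc : ContinuousOn s Oᶜ := by
    rw [continuousOn_iff_continuous_restrict]
    have : Oᶜ.domRestrict s =
        fun q : (Oᶜ : Set (A ∪ B : Set X)) =>
          sB ⟨(q : (A ∪ B : Set X)), (q.1.2.resolve_left q.2)⟩ := by
      funext q
      exact dif_neg q.2
    rw [this]
    exact sB.continuous.comp ((continuous_subtype_val.comp continuous_subtype_val).subtype_mk _)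
  have hcont : Continuous s := by
    rw [← continuousOn_univ]
    have : (univ : Set (A ∪ B : Set X)) = O ∪ Oᶜ := (union_compl_self O).symm
    rw [this]
    exact hcO.union_continuousAt hOopen
      (fun x hx => (hcOc.continuousAt (hOcopen.mem_nhds hx)))
  exact ⟨⟨s, hcont⟩, hval⟩

/-- Section over the empty set. -/
lemma empty_section {X Y : Type*} [TopologicalSpace X] [TopologicalSpace Y]
    (f : Y → X) (A : Set X) (hA : A = ∅) :
    ∃ s : C(A, Y), ∀ u : A, f (s u) = (u : X) := by
  have hE : IsEmpty A := by rw [hA]; infer_instance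
  refine ⟨⟨fun u => (hE.false u).elim, ?_⟩, fun u => (hE.false u).elim⟩
  rw [continuous_iff_continuousAt]
  exact fun u => (hE.false u).elim

/-- If `f : Y → X` is continuous, `X` is profinite, and every point of `X` has
an open neighbourhood over which `f` has a continuous section, then `f` has a
continuous section. -/
theorem profinite_section_of_local_sections (X Y : Type*) [TopologicalSpace X]
    [TopologicalSpace Y] [CompactSpace X] [T2Space X] [TotallyDisconnectedSpace X]
    (f : Y → X) (hf : Continuous f)
    (hloc : ∀ x : X, ∃ U : Set X, IsOpen U ∧ x ∈ U ∧
      ∃ s : C(U, Y), ∀ u : U, f (s u) = (u : X)) :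
    ∃ s : C(X, Y), ∀ x : X, f (s x) = x := by
  classical
  -- For each x, choose a clopen neighbourhood with a section
  have key : ∀ x : X, ∃ V : Set X, IsClopen V ∧ x ∈ V ∧
      ∃ s : C(V, Y), ∀ u : V, f (s u) = (u : X) := by
    intro x
    obtain ⟨U, hUopen, hxU, sU, hsU⟩ := hloc x
    obtain ⟨V, hVclopen, hxV, hVU⟩ := compact_exists_isClopen_in_isOpen hUopen hxU
    refine ⟨V, hVclopen, hxV, sU.comp ⟨fun p => ⟨p.1, hVU p.2⟩,
      continuous_subtype_val.subtype_mk _⟩, fun u => hsU _⟩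
  choose V hVclopen hxV sV hsV using key
  -- Compactness: finite subcover
  obtain ⟨t, ht⟩ := IsCompact.elim_finite_subcover isCompact_univ V
    (fun x => (hVclopen x).2) (fun x _ => mem_iUnion.2 ⟨x, hxV x⟩)
  -- Induction over the finite set: section over the union
  have main : ∀ u : Finset X, ∃ s : C((⋃ x ∈ u, V x : Set X), Y),
      ∀ p : (⋃ x ∈ u, V x : Set X), f (s p) = (p : X) := by
    intro u
    induction u using Finset.induction_on with
    | empty => exact empty_section f _ (by simp)
    | @insert a u ha ih =>
      obtain ⟨sRest, hsRest⟩ := ih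
      have hun : (⋃ x ∈ insert a u, V x : Set X) = V a ∪ ⋃ x ∈ u, V x := by
        simp [Set.biUnion_insert]
      obtain ⟨s, hs⟩ := glue_sections f (V a) (⋃ x ∈ u, V x) (hVclopen a)
        (sV a) (hsV a) sRest hsRest
      rw [hun]
      exact ⟨s, hs⟩
  obtain ⟨s, hs⟩ := main t
  have hcov : ∀ x : X, x ∈ (⋃ x ∈ t, V x : Set X) := fun x => ht (mem_univ x)
  refine ⟨s.comp ⟨fun x => ⟨x, hcov x⟩, continuous_id.subtype_mk _⟩, fun x => hs _⟩
end

section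
/- Let G be a finite group, X a Hausdorff space, and f : Y → X a profinite principal G-bundle over X (Y profinite, G acting freely and continuously on Y, f surjective, continuous, G-invariant, and each fibre f⁻¹(x) is a G-orbit). Then f admits a continuous section s : X → Y. -/
/-- A profinite principal `G`-bundle over a Hausdorff space, with `G` a finite
group, admits a continuous section. -/
theorem finite_principal_bundle_section (G X Y : Type*) [Group G] [Finite G]
    [TopologicalSpace X] [T2Space X] [TopologicalSpace Y] [CompactSpace Y]
    [T2Space Y] [TotallyDisconnectedSpace Y] [MulAction G Y]
    (hcont : ∀ g : G, Continuous fun y : Y => g • y)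
    (hfree : ∀ (g : G) (y : Y), g • y = y → g = 1)
    (f : Y → X) (hf : Continuous f) (hsurj : Function.Surjective f)
    (hinv : ∀ (g : G) (y : Y), f (g • y) = f y)
    (hfib : ∀ y y' : Y, f y = f y' → ∃ g : G, g • y = y') :
    ∃ s : C(X, Y), ∀ x : X, f (s x) = x := by
  classical
  -- Step 1: every point has a clopen neighbourhood meeting each orbit at most once.
  have step1 : ∀ y : Y, ∃ U : Set Y, IsClopen U ∧ y ∈ U ∧
      ∀ g : G, g ≠ 1 → ∀ u ∈ U, g • u ∉ U := by
    intro y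
    have key : ∀ g : G, ∃ W : Set Y, IsClopen W ∧ y ∈ W ∧
        (g ≠ 1 → ∀ u ∈ W, g • u ∉ W) := by
      intro g
      by_cases hg : g = 1
      · exact ⟨Set.univ, isClopen_univ, trivial, fun h => absurd hg h⟩
      · have hne : y ≠ g • y := fun h => hg (hfree g y h.symm)
        obtain ⟨W, hW, hyW, hgyW⟩ := exists_isClopen_of_totally_separated hne
        refine ⟨W ∩ (fun u => g • u) ⁻¹' Wᶜ, hW.inter (hW.compl.preimage (hcont g)),
          ⟨hyW, hgyW⟩, ?_⟩
        intro _ u hu hmem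
        exact hu.2 hmem.1
    choose W hWclopen hyW hWsep using key
    refine ⟨⋂ g, W g, isClopen_iInter_of_finite hWclopen, Set.mem_iInter.2 hyW, ?_⟩
    intro g hg u hu hmem
    exact hWsep g hg u (Set.mem_iInter.1 hu g) (Set.mem_iInter.1 hmem g)
  choose U hUclopen hyU hUsep using step1
  -- Step 2: finite subcover
  obtain ⟨t, ht⟩ := IsCompact.elim_finite_subcover isCompact_univ U
    (fun y => (hUclopen y).isOpen) (fun y _ => Set.mem_iUnion.2 ⟨y, hyU y⟩)
  set L := t.toList with hLdef
  set n := L.length with hndef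
  set Ui : Fin n → Set Y := fun k => U (L.get k) with hUidef
  have hcover : ∀ y : Y, ∃ k : Fin n, y ∈ Ui k := by
    intro y
    have := ht (Set.mem_univ y)
    simp only [Set.mem_iUnion] at this
    obtain ⟨z, hz, hyz⟩ := this
    have hmem : z ∈ L := Finset.mem_toList.2 hz
    obtain ⟨k, hk⟩ := List.mem_iff_get.1 hmem
    exact ⟨k, by rw [show Ui k = U z from congrArg U hk]; exact hyz⟩
  have himg : ∀ (g : G) (A : Set Y), (fun u => g • u) '' A = (fun u => g⁻¹ • u) ⁻¹' A := by
    intro g A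
    exact congrFun (Set.image_eq_preimage_of_inverse
      (fun u => inv_smul_smul g u) (fun u => smul_inv_smul g u)) A
  set V : Fin n → Set Y := fun k =>
    Ui k \ ⋃ j : Fin n, ⋃ (_ : j < k), ⋃ g : G, (fun u => g • u) '' Ui j with hVdef
  have hVclopen : ∀ k, IsClopen (V k) := by
    intro k
    refine (hUclopen _).diff ?_
    refine isClopen_iUnion_of_finite fun j => isClopen_iUnion_of_finite fun _ =>
      isClopen_iUnion_of_finite fun g => ?_
    rw [himg g]
    exact (hUclopen _).preimage (hcont g⁻¹)
  set S : Set Y := ⋃ k, V k with hSdef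
  -- Claim A : every orbit meets S
  have claimA : ∀ y : Y, ∃ p ∈ S, ∃ g : G, g • y = p := by
    intro y
    have hKne : {k : Fin n | ∃ g : G, g • y ∈ Ui k}.Nonempty := by
      obtain ⟨k, hk⟩ := hcover y
      exact ⟨k, 1, by simpa using hk⟩
    obtain ⟨k, hk, hmin⟩ := Set.exists_min_image _ id (Set.toFinite _) hKne
    obtain ⟨g, hg⟩ := hk
    refine ⟨g • y, Set.mem_iUnion.2 ⟨k, hg, ?_⟩, g, rfl⟩
    intro hmem
    simp only [Set.mem_iUnion] at hmem
    obtain ⟨j, hjk, h, p, hp, hpeq⟩ := hmem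
    have hmemj : (h⁻¹ * g) • y ∈ Ui j := by
      have : (h⁻¹ * g) • y = p := by rw [mul_smul, ← hpeq, inv_smul_smul]
      rw [this]; exact hp
    exact absurd (hmin j ⟨h⁻¹ * g, hmemj⟩) (not_le.2 hjk)
  -- Claim B : S meets each orbit at most once
  have claimB : ∀ p ∈ S, ∀ q ∈ S, ∀ g : G, g • p = q → p = q := by
    intro p hp q hq g hgpq
    obtain ⟨k, hpk⟩ := Set.mem_iUnion.1 hp
    obtain ⟨l, hql⟩ := Set.mem_iUnion.1 hq
    rcases lt_trichotomy k l with h | h | h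
    · have hmem : q ∈ (fun u => g • u) '' Ui k := hgpq ▸ Set.mem_image_of_mem _ hpk.1
      exact absurd (Set.mem_iUnion.2 ⟨k, Set.mem_iUnion.2 ⟨h,
        Set.mem_iUnion.2 ⟨g, hmem⟩⟩⟩) hql.2
    · by_cases hg1 : g = 1
      · rw [← hgpq, hg1, one_smul]
      · subst h
        exact absurd (hgpq ▸ hql.1) (hUsep (L.get k) g hg1 p hpk.1)
    · have hpq : p = g⁻¹ • q := by rw [← hgpq, inv_smul_smul]
      have hmem : p ∈ (fun u => g⁻¹ • u) '' Ui l := hpq ▸ Set.mem_image_of_mem _ hql.1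
      exact absurd (Set.mem_iUnion.2 ⟨l, Set.mem_iUnion.2 ⟨h,
        Set.mem_iUnion.2 ⟨g⁻¹, hmem⟩⟩⟩) hpk.2
  have hSclopen : IsClopen S := isClopen_iUnion_of_finite hVclopen
  haveI : CompactSpace S := isCompact_iff_compactSpace.1 hSclopen.isClosed.isCompact
  have hbij : Function.Bijective (fun p : S => f p) := by
    constructor
    · intro p q hpq
      obtain ⟨g, hg⟩ := hfib p q hpq
      exact Subtype.ext (claimB p p.2 q q.2 g hg)
    · intro x
      obtain ⟨y, hy⟩ := hsurj x
      obtain ⟨p, hpS, g, hg⟩ := claimA y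
      exact ⟨⟨p, hpS⟩, by simp only [← hg, hinv, hy]⟩
  have hecont : Continuous (fun p : S => f p) := hf.comp continuous_subtype_val
  let h := Continuous.homeoOfEquivCompactToT2 (f := Equiv.ofBijective _ hbij) hecont
  refine ⟨⟨fun x => (h.symm x : Y), continuous_subtype_val.comp h.symm.continuous⟩, ?_⟩
  intro x
  exact h.apply_symm_apply x
end

section
/- Let f : C → D be a surjective homomorphism of finite groups with D a 2-group, let P ⊆ C be a 2-Sylow subgroup, and let x ∈ C with x² = 1. Then (i) the restriction f|_P : P → D is surjective, and (ii) there exists h ∈ C such that h⁻¹xh ∈ P and f(x) = f(h⁻¹xh). -/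
/-- Let `f : C → D` be a surjective homomorphism of finite groups with `D` a
`2`-group, `P` a `2`-Sylow subgroup of `C`, and `x ∈ C` with `x² = 1`.  Then
`f` restricted to `P` is surjective, and `x` has a conjugate `h⁻¹xh ∈ P` with
`f x = f (h⁻¹xh)`. -/
theorem sylow_two_lemma (C D : Type*) [Group C] [Finite C] [Group D] [Finite D]
    (f : C →* D) (hf : Function.Surjective f) (hD : IsPGroup 2 D)
    (P : Sylow 2 C) (x : C) (hx : x ^ 2 = 1) :
    (∀ d : D, ∃ p ∈ (P : Subgroup C), f p = d) ∧
    (∃ h : C, h⁻¹ * x * h ∈ (P : Subgroup C) ∧ f x = f (h⁻¹ * x * h)) := by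
  haveI : Fact (Nat.Prime 2) := ⟨by norm_num⟩
  have htop : IsPGroup 2 (⊤ : Subgroup D) :=
    hD.of_equiv Subgroup.topEquiv.symm
  -- part (i)
  have hmap : (P : Subgroup C).map f = ⊤ := by
    have h := (P.mapSurjective hf).3 htop le_top
    rw [Sylow.coe_mapSurjective] at h
    exact h.symm
  have part1 : ∀ d : D, ∃ p ∈ (P : Subgroup C), f p = d := by
    intro d
    have : d ∈ (P : Subgroup C).map f := by rw [hmap]; trivial
    obtain ⟨p, hp, hpd⟩ := this
    exact ⟨p, hp, hpd⟩
  refine ⟨part1, ?_⟩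
  -- ⟨x⟩ is a 2-group
  have hxsub : IsPGroup 2 (Subgroup.zpowers x) := by
    intro g
    refine ⟨1, ?_⟩
    obtain ⟨n, hn⟩ := g.2
    have : (g : C) ^ (2 : ℕ) = 1 := by
      rw [← hn, ← zpow_natCast, ← zpow_mul, mul_comm, zpow_mul, zpow_natCast, hx, one_zpow]
    ext
    push_cast
    simpa using this
  obtain ⟨Q, hQ⟩ := hxsub.exists_le_sylow
  obtain ⟨g, hg⟩ := MulAction.exists_smul_eq C Q P
  have hxQ : x ∈ Q := hQ (Subgroup.mem_zpowers x)
  have hconj : g * x * g⁻¹ ∈ (P : Subgroup C) := by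
    rw [← hg, Sylow.coe_subgroup_smul]
    have := Subgroup.smul_mem_pointwise_smul x (MulAut.conj g) (Q : Subgroup C) hxQ
    simpa [MulAut.conj] using this
  obtain ⟨c, hcP, hcf⟩ := part1 (f g⁻¹)
  refine ⟨g⁻¹ * c⁻¹, ?_, ?_⟩
  · have : (g⁻¹ * c⁻¹)⁻¹ * x * (g⁻¹ * c⁻¹) = c * (g * x * g⁻¹) * c⁻¹ := by
      group
    rw [this]
    exact mul_mem (mul_mem hcP hconj) (inv_mem hcP)
  · have h1 : f (g⁻¹ * c⁻¹) = 1 := by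
      rw [map_mul, map_inv, map_inv, hcf, map_inv]
      group
    rw [map_mul, map_mul, map_inv, h1]
    simp
end
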